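/- Let N > 2 and 0 ≤ M ≤ N be integers. Then ∑_{h=0}^{M} r_PT(N,h) = ∑_{n≤N} Λ(n)ψ(n+M) + ∑_{n≤N} Λ(n)ψ(n) − ψ(N)². -/

import Mathlib

open Complex Filter Topology Finset

noncomputable section

/-- The Chebyshev psi function `ψ(x) = ∑_{n ≤ x} Λ(n)`. -/
def chebyshevPsi (x : ℝ) : ℝ := ∑ n ∈ Finset.Iic ⌊x⌋₊, ArithmeticFunction.vonMangoldt n

/-- The Goldbach counting function `r_G(n) = ∑_{m₁+m₂=n} Λ(m₁)Λ(m₂)`. -/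
def rG (n : ℕ) : ℝ := ∑ m ∈ Finset.range (n + 1),
  ArithmeticFunction.vonMangoldt m * ArithmeticFunction.vonMangoldt (n - m)

/-- The prime-tuples counting function `r_PT(N,h) = ∑_{n=0}^N Λ(n)Λ(n+h)`. -/
def rPT (N h : ℕ) : ℝ := ∑ n ∈ Finset.range (N + 1),
  ArithmeticFunction.vonMangoldt n * ArithmeticFunction.vonMangoldt (n + h)

/-- `ρ` is a nontrivial zero of the Riemann zeta function. -/
def IsNontrivialZero (ρ : ℂ) : Prop := riemannZeta ρ = 0 ∧ 0 < ρ.re ∧ ρ.re < 1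

-- The multiplicity of `ρ` as a zero of the Riemann zeta function.
open Classical in
def zeroMult (ρ : ℂ) : ℕ :=
  if h : AnalyticAt ℂ riemannZeta ρ then (analyticOrderAt riemannZeta ρ).toNat else 0

/-- The finite sum `∑_{ρ : |Im ρ| ≤ T} f(ρ)` over nontrivial zeros of `ζ`,
counted with multiplicity. -/
def zeroSumUpto (T : ℝ) (f : ℂ → ℂ) : ℂ :=
  ∑ᶠ ρ ∈ {ρ : ℂ | IsNontrivialZero ρ ∧ |ρ.im| ≤ T}, (zeroMult ρ : ℂ) * f ρ

/-- The series `∑_ρ f(ρ)` over the nontrivial zeros of `ζ`, understood as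
`lim_{T→∞} ∑_{ρ : |Im ρ| ≤ T} f(ρ)`, converges to `L`. -/
def ZeroSumTendsto (f : ℂ → ℂ) (L : ℂ) : Prop :=
  Filter.Tendsto (fun T : ℝ => zeroSumUpto T f) Filter.atTop (nhds L)

/-- Absolute convergence of a series over the nontrivial zeros of `ζ`
(with multiplicity). -/
def ZeroAbsSummable (f : ℂ → ℂ) : Prop :=
  Summable (fun ρ : {ρ : ℂ // IsNontrivialZero ρ} => (zeroMult ρ : ℝ) * ‖f ρ‖)

/-- The incomplete Beta function `B_z(a,b) = ∫_0^z t^(a-1) (1-t)^(b-1) dt`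
(extended to negative real `z` by the same integral). -/
def incBeta (z : ℝ) (a b : ℂ) : ℂ :=
  ∫ t in (0:ℝ)..z, (t : ℂ) ^ (a - 1) * ((1 : ℂ) - (t : ℂ)) ^ (b - 1)

/-- The logarithmic derivative of the Riemann zeta function. -/
def zetaLogDeriv (s : ℂ) : ℂ := deriv riemannZeta s / riemannZeta s

lemma sq_sum_aux (f : ℕ → ℝ) (k : ℕ) :
    (∑ n ∈ Finset.range k, f n) ^ 2 =
      2 * ∑ n ∈ Finset.range k, f n * (∑ m ∈ Finset.range (n + 1), f m)
        - ∑ n ∈ Finset.range k, (f n) ^ 2 := by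
  induction k with
  | zero => simp
  | succ k ih =>
    rw [Finset.sum_range_succ f, Finset.sum_range_succ (fun n => f n * _),
      Finset.sum_range_succ (fun n => (f n) ^ 2), Finset.sum_range_succ f k]
    nlinarith [ih]

lemma shift_sum_aux (f : ℕ → ℝ) (n M : ℕ) :
    ∑ h ∈ Finset.range (M + 1), f (n + h) =
      (∑ m ∈ Finset.range (n + M + 1), f m) - ∑ m ∈ Finset.range n, f m := by
  have h1 : ∑ h ∈ Finset.range (M + 1), f (n + h) = ∑ m ∈ Finset.Ico n (n + M + 1), f m := by
    rw [Finset.sum_Ico_eq_sum_range]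
    simp [Nat.add_sub_cancel_left, add_assoc]
  have h2 := Finset.sum_Ico_consecutive f (Nat.zero_le n) (by omega : n ≤ n + M + 1)
  simp only [Finset.range_eq_Ico] at *
  linarith [h2]

/-- basic identity for the average of prime-tuples
representations. -/
theorem sum_rPT_eq (N M : ℕ) (hN : 2 < N) (hM : M ≤ N) :
    ∑ h ∈ Finset.range (M + 1), rPT N h =
      (∑ n ∈ Finset.Iic N, ArithmeticFunction.vonMangoldt n *
          chebyshevPsi ((n + M : ℕ) : ℝ)) +
        (∑ n ∈ Finset.Iic N, ArithmeticFunction.vonMangoldt n *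
          chebyshevPsi ((n : ℕ) : ℝ)) -
        (chebyshevPsi (N : ℝ)) ^ 2 := by
  set Λ : ℕ → ℝ := fun n => ArithmeticFunction.vonMangoldt n with hΛ
  have hIic : ∀ n : ℕ, Finset.Iic n = Finset.range (n + 1) := by
    intro n; ext m; simp [Nat.lt_succ_iff]
  have hpsi : ∀ n : ℕ, chebyshevPsi (n : ℝ) = ∑ m ∈ Finset.range (n + 1), Λ m := by
    intro n
    simp only [chebyshevPsi, Nat.floor_natCast, hIic]
    rfl
  have hLHS : ∑ h ∈ Finset.range (M + 1), rPT N h =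
      ∑ n ∈ Finset.range (N + 1), Λ n *
        ((∑ m ∈ Finset.range (n + M + 1), Λ m) - ∑ m ∈ Finset.range n, Λ m) := by
    simp only [rPT]
    rw [Finset.sum_comm]
    refine Finset.sum_congr rfl fun n _ => ?_
    rw [← Finset.mul_sum, shift_sum_aux Λ n M]
  rw [hLHS]
  simp only [hIic N, hpsi]
  have hrange : ∀ n : ℕ, ∑ m ∈ Finset.range n, Λ m =
      (∑ m ∈ Finset.range (n + 1), Λ m) - Λ n := by
    intro n; rw [Finset.sum_range_succ]; ring
  have key := sq_sum_aux Λ (N + 1)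
  have split1 : ∑ n ∈ Finset.range (N + 1), Λ n *
        ((∑ m ∈ Finset.range (n + M + 1), Λ m) - ∑ m ∈ Finset.range n, Λ m) =
      (∑ n ∈ Finset.range (N + 1), Λ n * (∑ m ∈ Finset.range (n + M + 1), Λ m))
        - (∑ n ∈ Finset.range (N + 1), Λ n * (∑ m ∈ Finset.range (n + 1), Λ m))
        + ∑ n ∈ Finset.range (N + 1), (Λ n) ^ 2 := by
    rw [← Finset.sum_sub_distrib, ← Finset.sum_add_distrib]
    refine Finset.sum_congr rfl fun n _ => ?_
    rw [hrange n]; ring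
  rw [split1]
  linarith [key]

end
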